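/- arXiv:1908.10530 — 6 statements merged into one kernel-verified Lean document; each statement's English description precedes it below -/
import Mathlib

section
/- For real numbers y ≥ 1 and α > 1, the function y ↦ (y^α − y^{1−α})/(y − 1) is monotonically increasing on (1, ∞); equivalently, its derivative numerator (α−1)(y^α − y^{−α}) − α(y^{α−1} − y^{1−α}) is nonnegative for all y ≥ 1. -/
open Real

lemma sinh_aux (α : ℝ) (hα : 1 < α) :
    ∀ t : ℝ, 0 ≤ t → α * Real.sinh ((α - 1) * t) ≤ (α - 1) * Real.sinh (α * t) := by
  intro t ht
  set g : ℝ → ℝ := fun t => (α - 1) * Real.sinh (α * t) - α * Real.sinh ((α - 1) * t) with hg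
  have hder : ∀ x : ℝ, HasDerivAt g
      ((α - 1) * (Real.cosh (α * x) * α) - α * (Real.cosh ((α - 1) * x) * (α - 1))) x := by
    intro x
    have h1 : HasDerivAt (fun x : ℝ => Real.sinh (α * x)) (Real.cosh (α * x) * α) x := by
      simpa using ((hasDerivAt_id x).const_mul α).sinh
    have h2 : HasDerivAt (fun x : ℝ => Real.sinh ((α - 1) * x))
        (Real.cosh ((α - 1) * x) * (α - 1)) x := by
      simpa using ((hasDerivAt_id x).const_mul (α - 1)).sinh
    exact (h1.const_mul (α - 1)).sub (h2.const_mul α)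
  have hmono : MonotoneOn g (Set.Ici (0 : ℝ)) := by
    apply monotoneOn_of_deriv_nonneg (convex_Ici 0)
    · exact (Continuous.continuousOn (by continuity))
    · intro x hx
      exact (hder x).differentiableAt.differentiableWithinAt
    · intro x hx
      rw [interior_Ici] at hx
      rw [(hder x).deriv]
      have hx0 : (0 : ℝ) ≤ x := le_of_lt hx
      have hc : Real.cosh ((α - 1) * x) ≤ Real.cosh (α * x) := by
        rw [Real.cosh_le_cosh]
        rw [abs_of_nonneg (by nlinarith), abs_of_nonneg (by nlinarith)]
        nlinarith
      have hkey : 0 ≤ α * (α - 1) * (Real.cosh (α * x) - Real.cosh ((α - 1) * x)) :=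
        mul_nonneg (mul_nonneg (by linarith) (by linarith)) (by linarith)
      linarith [hkey]
  have h0 : g 0 = 0 := by simp [hg]
  have := hmono (Set.self_mem_Ici) (Set.mem_Ici.2 ht) ht
  rw [h0] at this
  simp only [hg] at this
  linarith

theorem deriv_numerator_nonneg_and_monotone (α : ℝ) (hα : 1 < α) :
    (∀ y : ℝ, 1 ≤ y →
      0 ≤ (α - 1) * (y ^ α - y ^ (-α)) - α * (y ^ (α - 1) - y ^ (1 - α))) ∧
    MonotoneOn (fun y : ℝ => (y ^ α - y ^ (1 - α)) / (y - 1)) (Set.Ioi (1 : ℝ)) := by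
  have part1 : ∀ y : ℝ, 1 ≤ y →
      0 ≤ (α - 1) * (y ^ α - y ^ (-α)) - α * (y ^ (α - 1) - y ^ (1 - α)) := by
    intro y hy
    have hy0 : (0 : ℝ) < y := lt_of_lt_of_le one_pos hy
    have ht : 0 ≤ Real.log y := Real.log_nonneg hy
    set t := Real.log y with hts
    have key := sinh_aux α hα t ht
    have e1 : y ^ α = Real.exp (α * t) := by
      rw [Real.rpow_def_of_pos hy0, hts]; ring_nf
    have e2 : y ^ (-α) = Real.exp (-(α * t)) := by
      rw [Real.rpow_def_of_pos hy0, hts]; ring_nf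
    have e3 : y ^ (α - 1) = Real.exp ((α - 1) * t) := by
      rw [Real.rpow_def_of_pos hy0, hts]; ring_nf
    have e4 : y ^ (1 - α) = Real.exp (-((α - 1) * t)) := by
      rw [Real.rpow_def_of_pos hy0, hts]; ring_nf
    rw [e1, e2, e3, e4]
    rw [Real.sinh_eq, Real.sinh_eq] at key
    linarith
  refine ⟨part1, ?_⟩
  have hderiv : ∀ y : ℝ, 1 < y → HasDerivAt (fun y : ℝ => (y ^ α - y ^ (1 - α)) / (y - 1))
      (((α * y ^ (α - 1) - (1 - α) * y ^ (1 - α - 1)) * (y - 1) - (y ^ α - y ^ (1 - α)) * 1)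
        / (y - 1) ^ 2) y := by
    intro y hy
    have hy0 : (0 : ℝ) < y := lt_trans one_pos hy
    have hN : HasDerivAt (fun y : ℝ => y ^ α - y ^ (1 - α))
        (α * y ^ (α - 1) - (1 - α) * y ^ (1 - α - 1)) y :=
      (Real.hasDerivAt_rpow_const (Or.inl hy0.ne')).sub
        (Real.hasDerivAt_rpow_const (Or.inl hy0.ne'))
    have hD : HasDerivAt (fun y : ℝ => y - 1) 1 y := by
      simpa using (hasDerivAt_id y).sub_const 1
    exact hN.div hD (sub_ne_zero.2 hy.ne')
  apply monotoneOn_of_deriv_nonneg (convex_Ioi 1)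
  · intro y hy
    exact ((hderiv y hy).differentiableAt.continuousAt).continuousWithinAt
  · intro y hy
    rw [interior_Ioi] at hy
    exact (hderiv y hy).differentiableAt.differentiableWithinAt
  · intro y hy
    rw [interior_Ioi] at hy
    rw [(hderiv y hy).deriv]
    have hy0 : (0 : ℝ) < y := lt_trans one_pos hy
    apply div_nonneg _ (by positivity)
    have e1 : y ^ (α - 1) * y = y ^ α := by
      rw [← Real.rpow_add_one hy0.ne']; ring_nf
    have e2 : y ^ (1 - α - 1) * y = y ^ (1 - α) := by
      rw [← Real.rpow_add_one hy0.ne']; ring_nf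
    have e3 : y ^ (1 - α - 1) = y ^ (-α) := by norm_num
    have h := part1 y hy.le
    rw [e3] at e2 ⊢
    have f1 : α * (y ^ (α - 1) * y) = α * y ^ α := by rw [e1]
    have f2 : (1 - α) * (y ^ (-α) * y) = (1 - α) * y ^ (1 - α) := by rw [e2]
    nlinarith [h, f1, f2]
end

section
/- Let α > 1, q ∈ [0,1], and u, v > 0. Then v·((1−q) + q·u/v)^α + u·((1−q) + q·v/u)^α ≥ v·((1−q) + q·u/v)^{1−α} + u·((1−q) + q·v/u)^{1−α}. -/
open Real

-- sinh x ≤ x * cosh x for x ≥ 0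
lemma aux_sinh_le (x : ℝ) (hx : 0 ≤ x) : Real.sinh x ≤ x * Real.cosh x := by
  have key : MonotoneOn (fun t : ℝ => t * Real.cosh t - Real.sinh t) (Set.Ici 0) := by
    have hd : ∀ t : ℝ, HasDerivAt (fun t : ℝ => t * Real.cosh t - Real.sinh t)
        (t * Real.sinh t) t := by
      intro t
      have h := ((hasDerivAt_id t).mul (Real.hasDerivAt_cosh t)).sub (Real.hasDerivAt_sinh t)
      refine h.congr_deriv ?_
      simp [id_eq]
    apply monotoneOn_of_deriv_nonneg (convex_Ici 0)
    · exact (Continuous.continuousOn (by continuity))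
    · intro t ht
      exact (hd t).differentiableAt.differentiableWithinAt
    · intro t ht
      rw [(hd t).deriv]
      have ht' : 0 < t := by simpa using ht
      exact mul_nonneg ht'.le (Real.sinh_nonneg_iff.2 ht'.le)
  have h0 := key (Set.self_mem_Ici) (Set.mem_Ici.2 hx) hx
  simp at h0
  linarith

-- b * sinh a ≤ a * sinh b for 0 ≤ a ≤ b
lemma aux_sinh_ratio {a b : ℝ} (ha : 0 ≤ a) (hab : a ≤ b) : b * Real.sinh a ≤ a * Real.sinh b := by
  have key : MonotoneOn (fun t : ℝ => a * Real.sinh t - t * Real.sinh a) (Set.Ici a) := by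
    have hd : ∀ t : ℝ, HasDerivAt (fun t : ℝ => a * Real.sinh t - t * Real.sinh a)
        (a * Real.cosh t - Real.sinh a) t := by
      intro t
      have h := ((hasDerivAt_const t a).mul (Real.hasDerivAt_sinh t)).sub
        ((hasDerivAt_id t).mul (hasDerivAt_const t (Real.sinh a)))
      refine h.congr_deriv ?_
      simp [id_eq]
    apply monotoneOn_of_deriv_nonneg (convex_Ici a)
    · exact (Continuous.continuousOn (by continuity))
    · intro t ht
      exact (hd t).differentiableAt.differentiableWithinAt
    · intro t ht
      rw [(hd t).deriv]
      have ht' : a < t := by simpa using ht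
      have h1 : Real.cosh a ≤ Real.cosh t := by
        rw [Real.cosh_le_cosh]
        rw [abs_of_nonneg ha, abs_of_nonneg (ha.trans ht'.le)]
        exact ht'.le
      have h2 : Real.sinh a ≤ a * Real.cosh a := aux_sinh_le a ha
      nlinarith [mul_le_mul_of_nonneg_left h1 ha]
  have h0 := key (Set.self_mem_Ici) (Set.mem_Ici.2 hab) hab
  simp at h0
  linarith

-- (γ+1) * sinh (γ l) ≤ γ * sinh ((γ+1) l)
lemma aux_sinh_scale {γ l : ℝ} (hγ : 0 < γ) (hl : 0 ≤ l) :
    (γ + 1) * Real.sinh (γ * l) ≤ γ * Real.sinh ((γ + 1) * l) := by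
  rcases eq_or_lt_of_le hl with rfl | hl'
  · simp
  · have h := aux_sinh_ratio (a := γ * l) (b := (γ + 1) * l)
      (by positivity) (by nlinarith)
    have := le_of_mul_le_mul_left (by nlinarith : l * ((γ+1) * Real.sinh (γ*l)) ≤ l * (γ * Real.sinh ((γ+1)*l))) hl'
    linarith

-- key rpow inequality: for 0 < y ≤ x, α > 1
lemma aux_key {α x y : ℝ} (hα : 1 < α) (hy : 0 < y) (hxy : y ≤ x) :
    α * (x ^ (α-1) * y ^ (1-α)) + (1-α) * (x ^ α * y ^ (-α))
      - (1-α) * (x ^ (-α) * y ^ α) - α * (x ^ (1-α) * y ^ (α-1)) ≤ 0 := by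
  have hx : 0 < x := hy.trans_le hxy
  set l : ℝ := Real.log x - Real.log y with hldef
  have hl : 0 ≤ l := by
    have := Real.log_le_log hy hxy
    simp [hldef]; linarith
  have hrw : ∀ c : ℝ, x ^ c * y ^ (-c) = Real.exp (c * l) := by
    intro c
    rw [Real.rpow_def_of_pos hx, Real.rpow_def_of_pos hy]
    rw [← Real.exp_add]
    congr 1
    simp [hldef]; ring
  have e1 : x ^ (α-1) * y ^ (1-α) = Real.exp ((α-1) * l) := by
    have := hrw (α-1); rw [show -(α-1) = 1-α by ring] at this; exact this
  have e2 : x ^ (1-α) * y ^ (α-1) = Real.exp (-((α-1) * l)) := by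
    have := hrw (1-α); rw [show -(1-α) = α-1 by ring] at this
    rw [this]; congr 1; ring
  have e3 : x ^ α * y ^ (-α) = Real.exp (α * l) := hrw α
  have e4 : x ^ (-α) * y ^ α = Real.exp (-(α * l)) := by
    have := hrw (-α); rw [show -(-α) = α by ring] at this
    rw [this]; congr 1; ring
  rw [e1, e2, e3, e4]
  have hγ : 0 < α - 1 := by linarith
  have h := aux_sinh_scale hγ hl
  rw [Real.sinh_eq, Real.sinh_eq] at h
  rw [show (α - 1 + 1) = α by ring] at h
  nlinarith [h]

-- antitonicity of G
lemma aux_G_anti {α s : ℝ} (hα : 1 < α) (hs : 0 ≤ s) {x y : ℝ} (hx : 0 < x) (hxy : x ≤ y) :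
    (y+s) ^ α * y ^ (1-α) - (y+s) ^ (1-α) * y ^ α ≤
      (x+s) ^ α * x ^ (1-α) - (x+s) ^ (1-α) * x ^ α := by
  set G : ℝ → ℝ := fun t => (t+s) ^ α * t ^ (1-α) - (t+s) ^ (1-α) * t ^ α with hGdef
  set D : ℝ → ℝ := fun t => α * ((t+s) ^ (α-1) * t ^ (1-α)) + (1-α) * ((t+s) ^ α * t ^ (-α))
      - (1-α) * ((t+s) ^ (-α) * t ^ α) - α * ((t+s) ^ (1-α) * t ^ (α-1)) with hDdef
  have hd : ∀ t : ℝ, 0 < t → HasDerivAt G (D t) t := by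
    intro t ht
    have hts : (0:ℝ) < t + s := by linarith
    have h1 : HasDerivAt (fun t : ℝ => (t+s) ^ α) (α * (t+s) ^ (α-1) * 1) t :=
      HasDerivAt.comp t (Real.hasDerivAt_rpow_const (Or.inl hts.ne')) ((hasDerivAt_id t).add_const s)
    have h2 : HasDerivAt (fun t : ℝ => (t+s) ^ (1-α)) ((1-α) * (t+s) ^ (1-α-1) * 1) t :=
      HasDerivAt.comp t (Real.hasDerivAt_rpow_const (Or.inl hts.ne')) ((hasDerivAt_id t).add_const s)
    have h3 : HasDerivAt (fun t : ℝ => t ^ (1-α)) ((1-α) * t ^ (1-α-1)) t :=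
      Real.hasDerivAt_rpow_const (Or.inl ht.ne')
    have h4 : HasDerivAt (fun t : ℝ => t ^ α) (α * t ^ (α-1)) t :=
      Real.hasDerivAt_rpow_const (Or.inl ht.ne')
    have h := (h1.mul h3).sub (h2.mul h4)
    refine h.congr_deriv ?_
    rw [hDdef]
    simp only
    rw [show (1:ℝ)-α-1 = -α by ring]
    ring
  have anti : AntitoneOn G (Set.Ici x) := by
    apply antitoneOn_of_deriv_nonpos (convex_Ici x)
    · intro t ht
      have ht' : 0 < t := hx.trans_le (Set.mem_Ici.1 ht)
      exact (hd t ht').differentiableAt.continuousAt.continuousWithinAt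
    · intro t ht
      rw [interior_Ici] at ht
      have ht' : 0 < t := hx.trans (Set.mem_Ioi.1 ht)
      exact (hd t ht').differentiableAt.differentiableWithinAt
    · intro t ht
      rw [interior_Ici] at ht
      have ht' : 0 < t := hx.trans (Set.mem_Ioi.1 ht)
      rw [(hd t ht').deriv]
      exact aux_key hα ht' (by linarith : t ≤ t + s)
  exact anti (Set.self_mem_Ici) (Set.mem_Ici.2 hxy) hxy

lemma aux_main (α q u v : ℝ) (hα : 1 < α) (hq0 : 0 ≤ q) (hq1 : q ≤ 1)
    (hu : 0 < u) (hv : 0 < v) (hvu : v ≤ u) :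
    v * ((1 - q) + q * (u / v)) ^ (1 - α) + u * ((1 - q) + q * (v / u)) ^ (1 - α) ≤
    v * ((1 - q) + q * (u / v)) ^ α + u * ((1 - q) + q * (v / u)) ^ α := by
  set s : ℝ := q * (u - v) with hsdef
  have hs : 0 ≤ s := mul_nonneg hq0 (by linarith)
  have hm : (0:ℝ) < v + s := by linarith
  have hn : (0:ℝ) < u - s := by nlinarith
  have e1 : (1 - q) + q * (u / v) = (v + s) / v := by
    field_simp
    ring
  have e2 : (1 - q) + q * (v / u) = (u - s) / u := by
    field_simp
    ring
  have key1 : ∀ c : ℝ, v * ((1 - q) + q * (u / v)) ^ c = v ^ (1 - c) * (v + s) ^ c := by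
    intro c
    rw [e1, Real.div_rpow hm.le hv.le, Real.rpow_sub hv, Real.rpow_one]
    ring
  have key2 : ∀ c : ℝ, u * ((1 - q) + q * (v / u)) ^ c = u ^ (1 - c) * (u - s) ^ c := by
    intro c
    rw [e2, Real.div_rpow hn.le hu.le, Real.rpow_sub hu, Real.rpow_one]
    ring
  rw [key1, key1, key2, key2, show (1:ℝ) - (1 - α) = α by ring]
  have hvn : v ≤ u - s := by nlinarith
  have hG := aux_G_anti (s := s) hα hs hv hvn
  rw [sub_add_cancel] at hG
  linarith

theorem mixture_pointwise_dominance (α q u v : ℝ) (hα : 1 < α) (hq0 : 0 ≤ q) (hq1 : q ≤ 1)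
    (hu : 0 < u) (hv : 0 < v) :
    v * ((1 - q) + q * (u / v)) ^ (1 - α) + u * ((1 - q) + q * (v / u)) ^ (1 - α) ≤
    v * ((1 - q) + q * (u / v)) ^ α + u * ((1 - q) + q * (v / u)) ^ α := by
  rcases le_total v u with h | h
  · exact aux_main α q u v hα hq0 hq1 hu hv h
  · have := aux_main α q v u hα hq0 hq1 hv hu h
    linarith
end

section
/- For real α ≥ 1 and real w with −1 < w ≤ 1/(α−1), it holds that (1+w)^α ≤ 1 + αw + α(α−1)w². -/
open Real

private lemma exp_le_one_add_two_mul {t : ℝ} (ht0 : 0 ≤ t) (ht1 : t ≤ 1) :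
    Real.exp t ≤ 1 + 2 * t := by
  have h := convexOn_exp.2 (Set.mem_univ (0 : ℝ)) (Set.mem_univ (1 : ℝ))
    (by linarith : (0:ℝ) ≤ 1 - t) ht0 (by ring)
  simp only [smul_eq_mul, mul_zero, mul_one, zero_add] at h
  have he : Real.exp 1 ≤ 3 := by
    have := Real.exp_one_lt_d9
    linarith
  calc Real.exp t ≤ (1 - t) * Real.exp 0 + t * Real.exp 1 := h
    _ ≤ (1 - t) * 1 + t * 3 := by
        rw [Real.exp_zero]
        nlinarith
    _ ≤ 1 + 2 * t := by ring_nf; linarith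

private lemma rpow_le_one_add_two_mul {β x : ℝ} (hβ : 0 ≤ β) (hx : 0 ≤ x)
    (hβx : β * x ≤ 1) : (1 + x) ^ β ≤ 1 + 2 * (β * x) := by
  have h1x : (0:ℝ) < 1 + x := by linarith
  have hlog : Real.log (1 + x) ≤ x := by
    have := Real.log_le_sub_one_of_pos h1x
    linarith
  calc (1 + x) ^ β = Real.exp (Real.log (1 + x) * β) := by
        rw [Real.rpow_def_of_pos h1x]
    _ ≤ Real.exp (β * x) := by
        apply Real.exp_le_exp.2
        nlinarith
    _ ≤ 1 + 2 * (β * x) := exp_le_one_add_two_mul (by positivity) hβx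

private lemma hasDerivAt_aux (α : ℝ) (hα : 1 ≤ α) {x : ℝ} (hx : -1 < x) :
    HasDerivAt (fun y : ℝ => 1 + α * y + α * (α - 1) * y ^ 2 - (1 + y) ^ α)
      (α + α * (α - 1) * (2 * x) - α * (1 + x) ^ (α - 1)) x := by
  have h1 : HasDerivAt (fun y : ℝ => 1 + y) 1 x := by
    simpa using (hasDerivAt_id x).const_add 1
  have h2 : HasDerivAt (fun y : ℝ => (1 + y) ^ α) (1 * α * (1 + x) ^ (α - 1)) x :=
    h1.rpow_const (Or.inl (by simpa using ne_of_gt (show (0:ℝ) < 1 + x by linarith)))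
  have h3 : HasDerivAt (fun y : ℝ => 1 + α * y + α * (α - 1) * y ^ 2)
      (α + α * (α - 1) * (2 * x)) x := by
    have := ((hasDerivAt_id x).const_mul α).const_add 1
    have h4 := ((hasDerivAt_pow 2 x).const_mul (α * (α - 1)))
    simpa [Pi.add_def] using this.add h4
  simpa [Pi.sub_def, mul_comm, mul_assoc] using h3.sub h2

private lemma contOn_aux (α : ℝ) {s : Set ℝ} (hs : ∀ x ∈ s, (0:ℝ) < 1 + x) :
    ContinuousOn (fun y : ℝ => 1 + α * y + α * (α - 1) * y ^ 2 - (1 + y) ^ α) s := by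
  apply ContinuousOn.sub
  · fun_prop
  · exact (continuousOn_const.add continuousOn_id).rpow_const
      (fun x hx => Or.inl (ne_of_gt (hs x hx)))

theorem one_add_pow_le (α w : ℝ) (hα : 1 ≤ α) (hw : -1 < w)
    (hw2 : 1 < α → w ≤ 1 / (α - 1)) :
    (1 + w) ^ α ≤ 1 + α * w + α * (α - 1) * w ^ 2 := by
  have h1w : (0:ℝ) < 1 + w := by linarith
  set f : ℝ → ℝ := fun y => 1 + α * y + α * (α - 1) * y ^ 2 - (1 + y) ^ α with hf
  have hf0 : f 0 = 0 := by simp [hf]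
  rw [← sub_nonneg]
  show 0 ≤ f w
  rcases le_or_gt α 2 with hα2 | hα2
  · -- 1 ≤ α ≤ 2 : Bernoulli with exponent α - 1 ∈ [0,1]
    have hb : (1 + w) ^ (α - 1) ≤ 1 + (α - 1) * w :=
      rpow_one_add_le_one_add_mul_self hw.le (by linarith) (by linarith)
    have hsplit : (1 + w) ^ α = (1 + w) * (1 + w) ^ (α - 1) := by
      rw [← Real.rpow_one_add' (by positivity) (by intro h; linarith)]
      ring_nf
    have hmul : (1 + w) * (1 + w) ^ (α - 1) ≤ (1 + w) * (1 + (α - 1) * w) :=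
      mul_le_mul_of_nonneg_left hb h1w.le
    have : (1 + w) ^ α ≤ 1 + α * w + (α - 1) * w ^ 2 := by
      rw [hsplit]
      nlinarith
    have hcoef : (α - 1) * w ^ 2 ≤ α * (α - 1) * w ^ 2 := by nlinarith [mul_nonneg (mul_nonneg (sub_nonneg.2 hα) (sub_nonneg.2 hα)) (sq_nonneg w)]
    simp only [hf]
    linarith
  · -- α > 2
    rcases le_or_gt w 0 with hwn | hwp
    · -- negative side: f antitone on [w, 0]
      have key : AntitoneOn f (Set.Icc w 0) := by
        apply antitoneOn_of_deriv_nonpos (convex_Icc w 0)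
        · exact contOn_aux α (fun x hx => by
            have := hx.1; have := hx.2; simp only [Set.mem_Icc] at hx; linarith [hx.1])
        · intro x hx
          rw [interior_Icc] at hx
          exact ((hasDerivAt_aux α hα (by linarith [hx.1])).differentiableAt).differentiableWithinAt
        · intro x hx
          rw [interior_Icc] at hx
          obtain ⟨hx1, hx2⟩ := hx
          have hx1' : (-1:ℝ) < x := by linarith
          rw [(hasDerivAt_aux α hα hx1').deriv]
          -- need α + α(α-1)(2x) - α(1+x)^(α-1) ≤ 0
          have hb : 1 + (α - 1) * x ≤ (1 + x) ^ (α - 1) :=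
            one_add_mul_self_le_rpow_one_add hx1'.le (by linarith)
          have hαpos : (0:ℝ) < α := by linarith
          nlinarith [mul_le_mul_of_nonneg_left hb hαpos.le,
            mul_nonneg (mul_nonneg hαpos.le (show (0:ℝ) ≤ α - 1 by linarith)) (neg_nonneg.2 hx2.le)]
      have := key (Set.mem_Icc.2 ⟨le_refl w, hwn⟩) (Set.mem_Icc.2 ⟨hwn, le_refl 0⟩) hwn
      rw [hf0] at this
      exact this
    · -- positive side: f monotone on [0, 1/(α-1)]
      have hα1 : (0:ℝ) < α - 1 := by linarith
      have hwle := hw2 (by linarith)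
      have key : MonotoneOn f (Set.Icc 0 (1 / (α - 1))) := by
        apply monotoneOn_of_deriv_nonneg (convex_Icc _ _)
        · exact contOn_aux α (fun x hx => by
            simp only [Set.mem_Icc] at hx; linarith [hx.1])
        · intro x hx
          rw [interior_Icc] at hx
          exact ((hasDerivAt_aux α hα (by linarith [hx.1])).differentiableAt).differentiableWithinAt
        · intro x hx
          rw [interior_Icc] at hx
          obtain ⟨hx1, hx2⟩ := hx
          rw [(hasDerivAt_aux α hα (by linarith)).deriv]
          have hβx : (α - 1) * x ≤ 1 := by
            rw [← le_div_iff₀' hα1]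
            exact hx2.le
          have hb : (1 + x) ^ (α - 1) ≤ 1 + 2 * ((α - 1) * x) :=
            rpow_le_one_add_two_mul (by linarith) hx1.le hβx
          have hαpos : (0:ℝ) < α := by linarith
          nlinarith
      have h0mem : (0:ℝ) ∈ Set.Icc (0:ℝ) (1 / (α - 1)) :=
        Set.mem_Icc.2 ⟨le_refl 0, by positivity⟩
      have hwmem : w ∈ Set.Icc (0:ℝ) (1 / (α - 1)) := Set.mem_Icc.2 ⟨hwp.le, hwle⟩
      have := key h0mem hwmem hwp.le
      rw [hf0] at this
      exact this
end

section
/- Let α ≥ 1, q ∈ [0,1], r₀ = 1 + 1/(q(α−1)) (with α > 1, q > 0), and let x, y > 0 satisfy 1/r₀ ≤ x/y ≤ r₀. Then x·(1 + q(y−x)/x)^α + y·(1 + q(x−y)/y)^α ≤ (x + y) + q²α(α−1)·(x²/y + y²/x − (x+y)). -/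
open Real

private lemma exp_le_one_add_two_mul_s8 {s : ℝ} (h0 : 0 ≤ s) (h1 : s ≤ 1) :
    Real.exp s ≤ 1 + 2 * s := by
  have hcvx := convexOn_exp.2 (Set.mem_univ (0:ℝ)) (Set.mem_univ (1:ℝ))
    (by linarith : (0:ℝ) ≤ 1 - s) h0 (by ring)
  simp only [smul_eq_mul, mul_zero, mul_one, zero_add, Real.exp_zero] at hcvx
  have he : Real.exp 1 < 2.7182818286 := Real.exp_one_lt_d9
  nlinarith

private lemma key_pointwise (α w : ℝ) (hα : 1 < α) (hw1 : -1 < w)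
    (hw2 : w ≤ 1 / (α - 1)) :
    (1 + w) ^ α ≤ 1 + α * w + α * (α - 1) * w ^ 2 := by
  have hα0 : (0:ℝ) < α - 1 := by linarith
  rcases le_or_gt α 2 with h2 | h2
  · -- easy case: (1+w)^(α-1) ≤ 1+(α-1)w by Bernoulli (exponent ≤ 1)
    have hb : (1 + w) ^ (α - 1) ≤ 1 + (α - 1) * w :=
      rpow_one_add_le_one_add_mul_self hw1.le (by linarith) (by linarith)
    have hpos : (0:ℝ) < 1 + w := by linarith
    have hsplit : (1 + w) ^ α = (1 + w) * (1 + w) ^ (α - 1) := by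
      rw [← Real.rpow_one_add' (by positivity) (by intro h; linarith)]
      ring_nf
    rw [hsplit]
    have h1 : (1 + w) * (1 + w) ^ (α - 1) ≤ (1 + w) * (1 + (α - 1) * w) :=
      mul_le_mul_of_nonneg_left hb hpos.le
    have hsq : 0 ≤ (α - 1) * (α - 1) * w ^ 2 := by positivity
    nlinarith [h1, hsq]
  · -- α > 2 : derivative argument
    set g : ℝ → ℝ := fun t => 1 + α * t + α * (α - 1) * t ^ 2 - (1 + t) ^ α with hg_def
    have hg : ∀ t : ℝ, HasDerivAt g
        (α + α * (α - 1) * (2 * t) - 1 * α * (1 + t) ^ (α - 1)) t := by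
      intro t
      have hpow : HasDerivAt (fun t : ℝ => (1 + t) ^ α) (1 * α * (1 + t) ^ (α - 1)) t :=
        HasDerivAt.rpow_const ((hasDerivAt_id t).const_add 1) (Or.inr hα.le)
      have hpoly : HasDerivAt (fun t : ℝ => 1 + α * t + α * (α - 1) * t ^ 2)
          (α + α * (α - 1) * (2 * t)) t := by
        have h1 : HasDerivAt (fun t : ℝ => α * t) α t := by
          simpa using (hasDerivAt_id t).const_mul α
        have h2 : HasDerivAt (fun t : ℝ => α * (α - 1) * t ^ 2)
            (α * (α - 1) * (2 * t)) t := by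
          have := (hasDerivAt_pow 2 t).const_mul (α * (α - 1))
          simpa [mul_comm, mul_assoc] using this
        exact ((h1.const_add 1).add h2)
      exact hpoly.sub hpow
    have hg0 : g 0 = 0 := by simp [hg_def]
    have hcont : Continuous g := by
      have : Differentiable ℝ g := fun t => (hg t).differentiableAt
      exact this.continuous
    have hgoal : 0 ≤ g w := by
      rcases le_or_gt 0 w with hw0 | hw0
      · -- monotone on [0, w]
        have hmono : MonotoneOn g (Set.Icc 0 w) := by
          apply monotoneOn_of_deriv_nonneg (convex_Icc 0 w) hcont.continuousOn
          · exact fun t _ => ((hg t).differentiableAt).differentiableWithinAt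
          · intro t ht
            rw [interior_Icc] at ht
            rw [(hg t).deriv]
            have ht0 : 0 < t := ht.1
            have htw : t < w := ht.2
            have h1t : (0:ℝ) < 1 + t := by linarith
            have hb1 : (1 + t) ^ (α - 1) ≤ Real.exp t ^ (α - 1) :=
              Real.rpow_le_rpow h1t.le (by linarith [Real.add_one_le_exp t]) (by linarith)
            have hb2 : Real.exp t ^ (α - 1) = Real.exp (t * (α - 1)) :=
              (Real.exp_mul t (α - 1)).symm
            have hb3 : Real.exp (t * (α - 1)) ≤ 1 + 2 * (t * (α - 1)) := by
              apply exp_le_one_add_two_mul_s8 (by positivity)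
              have : t ≤ 1 / (α - 1) := by linarith
              calc t * (α - 1) ≤ (1 / (α - 1)) * (α - 1) :=
                    mul_le_mul_of_nonneg_right this hα0.le
                _ = 1 := by field_simp
            have : (1 + t) ^ (α - 1) ≤ 1 + 2 * (t * (α - 1)) := by
              rw [← hb2] at hb3; linarith
            nlinarith [this]
        have := hmono (Set.left_mem_Icc.2 hw0) (Set.right_mem_Icc.2 hw0) hw0
        linarith [hg0 ▸ this]
      · -- antitone on [w, 0]
        have hanti : AntitoneOn g (Set.Icc w 0) := by
          apply antitoneOn_of_deriv_nonpos (convex_Icc w 0) hcont.continuousOn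
          · exact fun t _ => ((hg t).differentiableAt).differentiableWithinAt
          · intro t ht
            rw [interior_Icc] at ht
            rw [(hg t).deriv]
            have htw : w < t := ht.1
            have ht0 : t < 0 := ht.2
            have h1t : -1 < t := by linarith
            have hb : 1 + (α - 1) * t ≤ (1 + t) ^ (α - 1) :=
              one_add_mul_self_le_rpow_one_add h1t.le (by linarith)
            have hb' : α * (1 + (α - 1) * t) ≤ α * ((1 + t) ^ (α - 1)) :=
              mul_le_mul_of_nonneg_left hb (by positivity)
            have hneg : α * (α - 1) * t ≤ 0 := by nlinarith [mul_pos (show (0:ℝ) < α by linarith) hα0, ht0.le]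
            nlinarith [hb', hneg]
        have := hanti (Set.left_mem_Icc.2 hw0.le) (Set.right_mem_Icc.2 hw0.le) hw0.le
        linarith [hg0 ▸ this]
    simp only [hg_def] at hgoal
    linarith

theorem lemma_symmetric (α q x y : ℝ) (hα : 1 < α) (hq0 : 0 < q) (hq1 : q ≤ 1)
    (hx : 0 < x) (hy : 0 < y)
    (hlo : 1 / (1 + 1 / (q * (α - 1))) ≤ x / y)
    (hhi : x / y ≤ 1 + 1 / (q * (α - 1))) :
    x * (1 + q * ((y - x) / x)) ^ α + y * (1 + q * ((x - y) / y)) ^ α ≤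
      (x + y) + q ^ 2 * α * (α - 1) * (x ^ 2 / y + y ^ 2 / x - (x + y)) := by
  have hα0 : (0:ℝ) < α - 1 := by linarith
  have hqα : (0:ℝ) < q * (α - 1) := by positivity
  set r : ℝ := 1 + 1 / (q * (α - 1)) with hr_def
  have hr1 : 1 < r := by
    have : 0 < 1 / (q * (α - 1)) := by positivity
    simp only [hr_def]; linarith
  have hr0 : (0:ℝ) < r := by linarith
  -- from hlo : 1/r ≤ x/y we get y/x ≤ r
  have hyx : y / x ≤ r := by
    rw [div_le_div_iff₀ hr0 hy] at hlo
    rw [div_le_iff₀ hx]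
    nlinarith
  have hxy : x / y ≤ r := hhi
  have hqr : q * (r - 1) = 1 / (α - 1) := by
    simp only [hr_def]
    field_simp
    ring
  -- bounds for w1 = q*((y-x)/x)
  have hw1a : -1 < q * ((y - x) / x) := by
    have h1 : (y - x) / x = y / x - 1 := by field_simp
    have h2 : 0 < y / x := div_pos hy hx
    rw [h1]; nlinarith
  have hw1b : q * ((y - x) / x) ≤ 1 / (α - 1) := by
    have h1 : (y - x) / x = y / x - 1 := by field_simp
    rw [h1, ← hqr]
    exact mul_le_mul_of_nonneg_left (by linarith) hq0.le
  have hw2a : -1 < q * ((x - y) / y) := by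
    have h1 : (x - y) / y = x / y - 1 := by field_simp
    have h2 : 0 < x / y := div_pos hx hy
    rw [h1]; nlinarith
  have hw2b : q * ((x - y) / y) ≤ 1 / (α - 1) := by
    have h1 : (x - y) / y = x / y - 1 := by field_simp
    rw [h1, ← hqr]
    exact mul_le_mul_of_nonneg_left (by linarith) hq0.le
  have k1 := key_pointwise α (q * ((y - x) / x)) hα hw1a hw1b
  have k2 := key_pointwise α (q * ((x - y) / y)) hα hw2a hw2b
  have m1 : x * (1 + q * ((y - x) / x)) ^ α ≤
      x * (1 + α * (q * ((y - x) / x)) + α * (α - 1) * (q * ((y - x) / x)) ^ 2) :=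
    mul_le_mul_of_nonneg_left k1 hx.le
  have m2 : y * (1 + q * ((x - y) / y)) ^ α ≤
      y * (1 + α * (q * ((x - y) / y)) + α * (α - 1) * (q * ((x - y) / y)) ^ 2) :=
    mul_le_mul_of_nonneg_left k2 hy.le
  have heq : x * (1 + α * (q * ((y - x) / x)) + α * (α - 1) * (q * ((y - x) / x)) ^ 2) +
      y * (1 + α * (q * ((x - y) / y)) + α * (α - 1) * (q * ((x - y) / y)) ^ 2) =
      (x + y) + q ^ 2 * α * (α - 1) * (x ^ 2 / y + y ^ 2 / x - (x + y)) := by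
    field_simp
    ring
  linarith
end

section
/- Let μ0, μ1 be the densities of N(0,σ²) and N(1,σ²), q ∈ [0,1], and let integer α ≥ 1. Then E_{z∼μ0}[((1−q) + q μ1(z)/μ0(z))^α] = Σ_{k=0}^{α} C(α,k)(1−q)^{α−k} q^k exp((k² − k)/(2σ²)). -/
open Real MeasureTheory

noncomputable def gaussPdf (σ m x : ℝ) : ℝ :=
  (1 / (σ * Real.sqrt (2 * Real.pi))) * Real.exp (-(x - m) ^ 2 / (2 * σ ^ 2))

lemma gaussPdf_pos (σ m x : ℝ) (hσ : 0 < σ) : 0 < gaussPdf σ m x := by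
  unfold gaussPdf
  positivity

lemma integrable_gaussPdf (σ m : ℝ) (hσ : 0 < σ) :
    Integrable (fun x => gaussPdf σ m x) := by
  have hb : 0 < 1 / (2 * σ ^ 2) := by positivity
  have h1 : Integrable (fun x : ℝ => Real.exp (-(1 / (2 * σ ^ 2)) * x ^ 2)) :=
    integrable_exp_neg_mul_sq hb
  have h2 := (h1.comp_sub_right m)
  have h3 := h2.const_mul (1 / (σ * Real.sqrt (2 * Real.pi)))
  refine h3.congr ?_
  filter_upwards with x
  unfold gaussPdf
  congr 1
  ring_nf

lemma integral_gaussPdf (σ m : ℝ) (hσ : 0 < σ) :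
    ∫ x, gaussPdf σ m x = 1 := by
  have hb : 0 < 1 / (2 * σ ^ 2) := by positivity
  have key : ∫ x : ℝ, Real.exp (-(1 / (2 * σ ^ 2)) * x ^ 2) =
      Real.sqrt (Real.pi / (1 / (2 * σ ^ 2))) := integral_gaussian _
  unfold gaussPdf
  rw [MeasureTheory.integral_const_mul]
  have hshift : ∫ x : ℝ, Real.exp (-(x - m) ^ 2 / (2 * σ ^ 2)) =
      ∫ x : ℝ, Real.exp (-(1 / (2 * σ ^ 2)) * x ^ 2) := by
    rw [← MeasureTheory.integral_sub_right_eq_self (fun x => Real.exp (-(1 / (2 * σ ^ 2)) * x ^ 2)) m]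
    congr 1; ext x; congr 1; ring
  rw [hshift, key]
  have : Real.pi / (1 / (2 * σ ^ 2)) = (2 * Real.pi) * σ ^ 2 := by
    field_simp
  rw [this, Real.sqrt_mul (by positivity : (0:ℝ) ≤ 2 * Real.pi) (σ ^ 2),
    Real.sqrt_sq hσ.le]
  have h2π : 0 < Real.sqrt (2 * Real.pi) := Real.sqrt_pos.2 (by positivity)
  field_simp

lemma pointwise_key (σ : ℝ) (hσ : 0 < σ) (k : ℕ) (z : ℝ) :
    gaussPdf σ 0 z * (gaussPdf σ 1 z / gaussPdf σ 0 z) ^ k =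
      Real.exp (((k : ℝ) ^ 2 - k) / (2 * σ ^ 2)) * gaussPdf σ (k : ℝ) z := by
  have hσ2 : (σ : ℝ) ^ 2 ≠ 0 := by positivity
  have hratio : gaussPdf σ 1 z / gaussPdf σ 0 z =
      Real.exp ((2 * z - 1) / (2 * σ ^ 2)) := by
    unfold gaussPdf
    have hc : (1 / (σ * Real.sqrt (2 * Real.pi))) ≠ 0 := by positivity
    rw [mul_div_mul_left _ _ hc, ← Real.exp_sub]
    congr 1
    field_simp
    ring
  rw [hratio, ← Real.exp_nat_mul]
  unfold gaussPdf
  rw [mul_comm (Real.exp _) _, mul_assoc, mul_assoc, ← Real.exp_add, ← Real.exp_add]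
  congr 1
  field_simp
  ring

theorem A_alpha_integer_closed_form (σ q : ℝ) (hσ : 0 < σ) (hq0 : 0 ≤ q) (hq1 : q ≤ 1)
    (α : ℕ) (hα : 1 ≤ α) :
    ∫ z, gaussPdf σ 0 z * ((1 - q) + q * (gaussPdf σ 1 z / gaussPdf σ 0 z)) ^ α =
      ∑ k ∈ Finset.range (α + 1),
        (α.choose k : ℝ) * (1 - q) ^ (α - k) * q ^ k *
          Real.exp (((k : ℝ) ^ 2 - k) / (2 * σ ^ 2)) := by
  have hpt : ∀ z, gaussPdf σ 0 z * ((1 - q) + q * (gaussPdf σ 1 z / gaussPdf σ 0 z)) ^ α =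
      ∑ k ∈ Finset.range (α + 1),
        (α.choose k : ℝ) * (1 - q) ^ (α - k) * q ^ k *
          (Real.exp (((k : ℝ) ^ 2 - k) / (2 * σ ^ 2)) * gaussPdf σ (k : ℝ) z) := by
    intro z
    rw [add_comm ((1:ℝ) - q), add_pow, Finset.mul_sum]
    refine Finset.sum_congr rfl fun k hk => ?_
    have hk' : (q * (gaussPdf σ 1 z / gaussPdf σ 0 z)) ^ k =
        q ^ k * (gaussPdf σ 1 z / gaussPdf σ 0 z) ^ k := mul_pow _ _ _
    rw [hk']
    rw [show gaussPdf σ 0 z *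
        (q ^ k * (gaussPdf σ 1 z / gaussPdf σ 0 z) ^ k * (1 - q) ^ (α - k) * (α.choose k : ℝ)) =
        (α.choose k : ℝ) * (1 - q) ^ (α - k) * q ^ k *
          (gaussPdf σ 0 z * (gaussPdf σ 1 z / gaussPdf σ 0 z) ^ k) by ring]
    rw [pointwise_key σ hσ k z]
  calc ∫ z, gaussPdf σ 0 z * ((1 - q) + q * (gaussPdf σ 1 z / gaussPdf σ 0 z)) ^ α
      = ∫ z, ∑ k ∈ Finset.range (α + 1),
        (α.choose k : ℝ) * (1 - q) ^ (α - k) * q ^ k *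
          (Real.exp (((k : ℝ) ^ 2 - k) / (2 * σ ^ 2)) * gaussPdf σ (k : ℝ) z) := by
        congr 1; ext z; exact hpt z
    _ = ∑ k ∈ Finset.range (α + 1), ∫ z,
        (α.choose k : ℝ) * (1 - q) ^ (α - k) * q ^ k *
          (Real.exp (((k : ℝ) ^ 2 - k) / (2 * σ ^ 2)) * gaussPdf σ (k : ℝ) z) := by
        apply MeasureTheory.integral_finset_sum
        intro k _
        exact (((integrable_gaussPdf σ (k : ℝ) hσ).const_mul _).const_mul _)
    _ = ∑ k ∈ Finset.range (α + 1),
        (α.choose k : ℝ) * (1 - q) ^ (α - k) * q ^ k *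
          Real.exp (((k : ℝ) ^ 2 - k) / (2 * σ ^ 2)) := by
        refine Finset.sum_congr rfl fun k _ => ?_
        rw [MeasureTheory.integral_const_mul, MeasureTheory.integral_const_mul,
          integral_gaussPdf σ (k : ℝ) hσ, mul_one]
end

section
/- Suppose q ≤ 1/5, σ ≥ 4, and α > 1 satisfies α ≤ (1/2)σ²L − 2 ln σ and α ≤ ((1/2)σ²L² − ln 5 − 2 ln σ)/(L + ln(qα) + 1/(2σ²)), where L = ln(1 + 1/(q(α−1))). Then with z₀ = 1/2 + σ²L and μ0, μ1 the densities of N(0,σ²), N(1,σ²): ∫_{z₀}^∞ μ0(z)·((1−q) + q μ1(z)/μ0(z))^α dz ≤ 0.9·q²α(α−1)/σ². -/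
set_option maxHeartbeats 1000000

open Real MeasureTheory

lemma gaussPdf_nonneg (σ m x : ℝ) (hσ : 0 ≤ σ) : 0 ≤ gaussPdf σ m x := by
  unfold gaussPdf
  have h := Real.sqrt_nonneg (2 * Real.pi)
  positivity

lemma gaussPdf_ratio (σ : ℝ) (hσ : 0 < σ) (z : ℝ) :
    gaussPdf σ 1 z / gaussPdf σ 0 z = Real.exp ((2 * z - 1) / (2 * σ ^ 2)) := by
  have h := Real.sqrt_pos.mpr (by positivity : (0:ℝ) < 2 * Real.pi)
  unfold gaussPdf
  rw [mul_div_mul_left _ _ (by positivity), ← Real.exp_sub]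
  congr 1
  field_simp
  ring

lemma pointwise_bound (σ q α L z : ℝ) (hσ : 0 < σ) (hq0 : 0 < q) (hq1 : q ≤ 1)
    (hα : 1 < α) (heL : Real.exp L = 1 + 1 / (q * (α - 1)))
    (hz : 1 / 2 + σ ^ 2 * L ≤ z) :
    gaussPdf σ 0 z * ((1 - q) + q * (gaussPdf σ 1 z / gaussPdf σ 0 z)) ^ α ≤
      (q * α) ^ α * Real.exp ((α ^ 2 - α) / (2 * σ ^ 2)) * gaussPdf σ α z := by
  have ht : 0 < q * (α - 1) := by nlinarith
  set c := (2 * z - 1) / (2 * σ ^ 2) with hc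
  have hrL : Real.exp L ≤ Real.exp c := by
    apply Real.exp_le_exp.mpr
    rw [hc, le_div_iff₀ (by positivity)]
    nlinarith
  set r := Real.exp c with hr
  have hr1 : 1 < r := by
    have : (1:ℝ) < Real.exp L := by rw [heL]; nlinarith [one_div_pos.mpr ht]
    linarith
  -- key : (exp L - 1) * (q * (α-1)) = 1
  have hkey : (Real.exp L - 1) * (q * (α - 1)) = 1 := by
    rw [heL, add_sub_cancel_left, one_div, inv_mul_cancel₀ ht.ne']
  have hbase_le : (1 - q) + q * r ≤ q * α * r := by nlinarith [hrL, hr1, ht]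
  have hbase_nonneg : (0:ℝ) ≤ (1 - q) + q * r := by nlinarith
  rw [gaussPdf_ratio σ hσ z, ← hc, ← hr]
  have hpow : ((1 - q) + q * r) ^ α ≤ (q * α * r) ^ α :=
    Real.rpow_le_rpow hbase_nonneg hbase_le (by linarith)
  have hsplit : (q * α * r) ^ α = (q * α) ^ α * Real.exp (c * α) := by
    rw [Real.mul_rpow (by positivity) (by positivity)]
    congr 1
    rw [hr, ← Real.exp_log (Real.exp_pos c), Real.log_exp,
      Real.rpow_def_of_pos (Real.exp_pos c), Real.log_exp]
  have hpdf0 : 0 ≤ gaussPdf σ 0 z := by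
    unfold gaussPdf; positivity
  calc gaussPdf σ 0 z * ((1 - q) + q * r) ^ α
      ≤ gaussPdf σ 0 z * ((q * α) ^ α * Real.exp (c * α)) := by
        rw [← hsplit]; exact mul_le_mul_of_nonneg_left hpow hpdf0
    _ = (q * α) ^ α * Real.exp ((α ^ 2 - α) / (2 * σ ^ 2)) * gaussPdf σ α z := by
        unfold gaussPdf
        have hexp : Real.exp (-(z - 0) ^ 2 / (2 * σ ^ 2)) * Real.exp (c * α) =
            Real.exp ((α ^ 2 - α) / (2 * σ ^ 2)) * Real.exp (-(z - α) ^ 2 / (2 * σ ^ 2)) := by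
          rw [← Real.exp_add, ← Real.exp_add]
          congr 1
          rw [hc]
          field_simp
          ring
        linear_combination (1 / (σ * Real.sqrt (2 * Real.pi)) * (q * α) ^ α) * hexp
lemma gaussPdf_integrable (σ m : ℝ) (hσ : 0 < σ) : Integrable (gaussPdf σ m) := by
  have hb : (0:ℝ) < 1 / (2 * σ ^ 2) := by positivity
  have h1 : Integrable fun x : ℝ => Real.exp (-(1 / (2 * σ ^ 2)) * x ^ 2) :=
    integrable_exp_neg_mul_sq hb
  have h2 := (h1.comp_sub_right m).const_mul (1 / (σ * Real.sqrt (2 * Real.pi)))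
  refine h2.congr (Filter.Eventually.of_forall fun x => ?_)
  simp only [gaussPdf]
  congr 1
  ring

lemma gaussPdf_half (σ z₀ : ℝ) (hσ : 0 < σ) :
    ∫ z in Set.Ioi z₀, gaussPdf σ z₀ z = 1 / 2 := by
  have key : ∫ x in (fun x => x + z₀) ⁻¹' (Set.Ioi z₀), gaussPdf σ z₀ (x + z₀) =
      ∫ y in Set.Ioi z₀, gaussPdf σ z₀ y :=
    (measurePreserving_add_right volume z₀).setIntegral_preimage_emb
      (MeasurableEquiv.addRight z₀).measurableEmbedding _ _
  have hpre : (fun x : ℝ => x + z₀) ⁻¹' (Set.Ioi z₀) = Set.Ioi 0 := by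
    ext x; simp
  rw [← key, hpre]
  have heq : ∀ x : ℝ, gaussPdf σ z₀ (x + z₀) =
      (1 / (σ * Real.sqrt (2 * Real.pi))) * Real.exp (-(1 / (2 * σ ^ 2)) * x ^ 2) := by
    intro x; simp only [gaussPdf]; congr 1; ring
  rw [setIntegral_congr_fun measurableSet_Ioi fun x _ => heq x]
  rw [integral_const_mul, integral_gaussian_Ioi]
  have h2π : (0:ℝ) < Real.sqrt (2 * Real.pi) := Real.sqrt_pos.mpr (by positivity)
  have : Real.sqrt (Real.pi / (1 / (2 * σ ^ 2))) = σ * Real.sqrt (2 * Real.pi) := by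
    rw [show Real.pi / (1 / (2 * σ ^ 2)) = σ ^ 2 * (2 * Real.pi) by field_simp,
      Real.sqrt_mul (by positivity), Real.sqrt_sq hσ.le]
  rw [this]
  field_simp

lemma gaussPdf_tail (σ α z₀ : ℝ) (hσ : 0 < σ) (hz : α ≤ z₀) :
    ∫ z in Set.Ioi z₀, gaussPdf σ α z ≤
      1 / 2 * Real.exp (-(z₀ - α) ^ 2 / (2 * σ ^ 2)) := by
  have h2π : (0:ℝ) < Real.sqrt (2 * Real.pi) := Real.sqrt_pos.mpr (by positivity)
  have hmono : ∀ z ∈ Set.Ioi z₀, gaussPdf σ α z ≤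
      Real.exp (-(z₀ - α) ^ 2 / (2 * σ ^ 2)) * gaussPdf σ z₀ z := by
    intro z hz'
    simp only [Set.mem_Ioi] at hz'
    unfold gaussPdf
    rw [show Real.exp (-(z₀ - α) ^ 2 / (2 * σ ^ 2)) *
        (1 / (σ * Real.sqrt (2 * Real.pi)) * Real.exp (-(z - z₀) ^ 2 / (2 * σ ^ 2))) =
        1 / (σ * Real.sqrt (2 * Real.pi)) *
        (Real.exp (-(z₀ - α) ^ 2 / (2 * σ ^ 2)) * Real.exp (-(z - z₀) ^ 2 / (2 * σ ^ 2))) by ring,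
      ← Real.exp_add]
    apply mul_le_mul_of_nonneg_left _ (by positivity)
    apply Real.exp_le_exp.mpr
    rw [← add_div, div_le_div_iff₀ (by positivity) (by positivity)]
    nlinarith [mul_nonneg (sub_nonneg.mpr hz'.le) (sub_nonneg.mpr hz)]
  calc ∫ z in Set.Ioi z₀, gaussPdf σ α z
      ≤ ∫ z in Set.Ioi z₀, Real.exp (-(z₀ - α) ^ 2 / (2 * σ ^ 2)) * gaussPdf σ z₀ z := by
        apply integral_mono_of_nonneg
        · exact Filter.Eventually.of_forall fun z => by unfold gaussPdf; positivity
        · exact ((gaussPdf_integrable σ z₀ hσ).const_mul _).integrableOn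
        · exact (ae_restrict_iff' measurableSet_Ioi).mpr (Filter.Eventually.of_forall hmono)
    _ = Real.exp (-(z₀ - α) ^ 2 / (2 * σ ^ 2)) * ∫ z in Set.Ioi z₀, gaussPdf σ z₀ z :=
        integral_const_mul _ _
    _ = 1 / 2 * Real.exp (-(z₀ - α) ^ 2 / (2 * σ ^ 2)) := by
        rw [gaussPdf_half σ z₀ hσ]; ring
lemma core_ineq (σ q α L : ℝ) (hq0 : 0 < q) (hq : q ≤ 1 / 5) (hσ : 4 ≤ σ)
    (hα : 1 < α) (hL : L = Real.log (1 + 1 / (q * (α - 1))))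
    (hα1 : α ≤ (1 / 2) * σ ^ 2 * L - 2 * Real.log σ)
    (hα2 : α ≤ ((1 / 2) * σ ^ 2 * L ^ 2 - Real.log 5 - 2 * Real.log σ) /
        (L + Real.log (q * α) + 1 / (2 * σ ^ 2))) :
    α * Real.log (q * α) + α * L - 1 / (8 * σ ^ 2) - L / 2 - σ ^ 2 * L ^ 2 / 2 ≤
      Real.log 1.8 + (Real.log (q * α) + Real.log (q * (α - 1))) - 2 * Real.log σ := by
  have hσ0 : (0:ℝ) < σ := by linarith
  have ht : 0 < q * (α - 1) := by nlinarith
  have hqα : 0 < q * α := by nlinarith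
  set X := Real.log (q * α) with hX
  set t := q * (α - 1) with htdef
  have heL : Real.exp L = 1 + 1 / t := by rw [hL]; exact Real.exp_log (by positivity)
  have hLpos : 0 < L := by
    rw [hL]; apply Real.log_pos; nlinarith [one_div_pos.mpr ht]
  have hlogσ : 2 * Real.log 2 ≤ Real.log σ := by
    have h4 : Real.log 4 ≤ Real.log σ := Real.log_le_log (by norm_num) hσ
    rw [show (4:ℝ) = 2 ^ 2 by norm_num, Real.log_pow] at h4
    push_cast at h4; linarith
  have hσ2 : (0:ℝ) < 1 / (8 * σ ^ 2) := by positivity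
  by_cases hcase : 1 / 2 ≤ t ∨ 1 ≤ q * α
  · -- route via hα2
    have hD : 0 < L + X + 1 / (2 * σ ^ 2) := by
      have hLX : 0 < L + X := by
        have h1 : Real.exp 0 < Real.exp (L + X) := by
          rw [Real.exp_zero, Real.exp_add, heL, hX, Real.exp_log hqα]
          have : (1 + 1 / t) * (q * α) = q * α + q * α / t := by ring
          rw [this, htdef, show q * α / (q * (α - 1)) = α / (α - 1) by
            rw [mul_div_mul_left _ _ (ne_of_gt hq0)]]
          have : 1 < α / (α - 1) := by
            rw [lt_div_iff₀ (by linarith)]; linarith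
          nlinarith
        exact Real.exp_lt_exp.mp h1
      positivity
    have h2 : α * (L + X + 1 / (2 * σ ^ 2)) ≤
        (1 / 2) * σ ^ 2 * L ^ 2 - Real.log 5 - 2 * Real.log σ :=
      (le_div_iff₀ hD).mp hα2
    have h2e : α * L + α * X + α * (1 / (2 * σ ^ 2)) ≤
        (1 / 2) * σ ^ 2 * L ^ 2 - Real.log 5 - 2 * Real.log σ :=
      le_trans (le_of_eq (by ring)) h2
    have hP : (1:ℝ) / 9 ≤ q * α * t := by
      rcases hcase with h | h
      · nlinarith
      · nlinarith
    have hlogP : -Real.log 9 ≤ X + Real.log t := by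
      have h1 : Real.log (1 / 9) ≤ Real.log (q * α * t) :=
        Real.log_le_log (by norm_num) hP
      rw [Real.log_mul (ne_of_gt hqα) (ne_of_gt ht), one_div, Real.log_inv] at h1
      exact h1
    have h95 : Real.log 1.8 + Real.log 5 = Real.log 9 := by
      rw [← Real.log_mul (by norm_num) (by norm_num)]; norm_num
    have hα2σ : 0 ≤ α * (1 / (2 * σ ^ 2)) := by positivity
    linarith
  · push_neg at hcase
    obtain ⟨ht2, hqα1⟩ := hcase
    have hXneg : X < 0 := Real.log_neg hqα hqα1
    have hXa : α * X ≤ X := by nlinarith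
    have hL3 : Real.log 3 ≤ L := by
      rw [hL]
      apply Real.log_le_log (by norm_num)
      have : (2:ℝ) ≤ 1 / t := by rw [le_div_iff₀ ht]; linarith
      linarith
    have h98 : 3 * Real.log 2 ≤ 2 * Real.log 3 := by
      have h := Real.log_le_log (by norm_num : (0:ℝ) < 8) (by norm_num : (8:ℝ) ≤ 9)
      rw [show (8:ℝ) = 2 ^ 3 by norm_num, show (9:ℝ) = 3 ^ 2 by norm_num,
        Real.log_pow, Real.log_pow] at h
      push_cast at h; linarith
    have hlogt : -L ≤ Real.log t := by
      have h1 : Real.log t⁻¹ ≤ Real.log (1 + 1 / t) :=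
        Real.log_le_log (by positivity) (by rw [inv_eq_one_div]; linarith)
      rw [Real.log_inv] at h1
      rw [hL]
      linarith
    have h1e : α * L ≤ ((1 / 2) * σ ^ 2 * L - 2 * Real.log σ) * L :=
      mul_le_mul_of_nonneg_right hα1 hLpos.le
    have hlog2l : (0.6931471803 : ℝ) < Real.log 2 := Real.log_two_gt_d9
    have hlog2u : Real.log 2 < 0.6931471808 := Real.log_two_lt_d9
    have hlog18 : (4:ℝ) / 9 ≤ Real.log 1.8 := by
      have h := Real.log_le_sub_one_of_pos (show (0:ℝ) < (1.8)⁻¹ by norm_num)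
      rw [Real.log_inv] at h
      have h2 : ((1.8:ℝ))⁻¹ - 1 = -(4 / 9) := by norm_num
      linarith
    have hL32 : 3 / 2 * Real.log 2 ≤ L := by linarith
    have hL1 : 1 ≤ L := by nlinarith
    nlinarith [mul_nonneg (sub_nonneg.mpr hlogσ) (sub_nonneg.mpr hL1),
      mul_nonneg (sub_nonneg.mpr hL32) (by nlinarith : (0:ℝ) ≤ 4 * Real.log 2 - 1 / 2),
      sq_nonneg (Real.log 2 - 0.6931471803), hσ2.le]
lemma arith_bound (σ q α L : ℝ) (hq0 : 0 < q) (hq : q ≤ 1 / 5) (hσ : 4 ≤ σ)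
    (hα : 1 < α) (hL : L = Real.log (1 + 1 / (q * (α - 1))))
    (hα1 : α ≤ (1 / 2) * σ ^ 2 * L - 2 * Real.log σ)
    (hα2 : α ≤ ((1 / 2) * σ ^ 2 * L ^ 2 - Real.log 5 - 2 * Real.log σ) /
        (L + Real.log (q * α) + 1 / (2 * σ ^ 2))) :
    (q * α) ^ α * Real.exp ((α ^ 2 - α) / (2 * σ ^ 2)) *
      (1 / 2 * Real.exp (-(1 / 2 + σ ^ 2 * L - α) ^ 2 / (2 * σ ^ 2))) ≤
    0.9 * q ^ 2 * α * (α - 1) / σ ^ 2 := by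
  have hσ0 : (0:ℝ) < σ := by linarith
  have ht : 0 < q * (α - 1) := by nlinarith
  have hqα : 0 < q * α := by nlinarith
  have hpow : (q * α) ^ α = Real.exp (Real.log (q * α) * α) := Real.rpow_def_of_pos hqα α
  have hmul : ∀ a b c : ℝ, Real.exp a * Real.exp b * (1 / 2 * Real.exp c) =
      1 / 2 * Real.exp (a + b + c) := by
    intro a b c; rw [Real.exp_add, Real.exp_add]; ring
  rw [hpow, hmul]
  have hSeq : Real.log (q * α) * α + (α ^ 2 - α) / (2 * σ ^ 2) +
      -(1 / 2 + σ ^ 2 * L - α) ^ 2 / (2 * σ ^ 2) =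
      α * Real.log (q * α) + α * L - 1 / (8 * σ ^ 2) - L / 2 - σ ^ 2 * L ^ 2 / 2 := by
    field_simp
    ring
  have hR : (0:ℝ) < 1.8 * (q * α * (q * (α - 1))) / σ ^ 2 := by positivity
  have hlogR : Real.log (1.8 * (q * α * (q * (α - 1))) / σ ^ 2) =
      Real.log 1.8 + (Real.log (q * α) + Real.log (q * (α - 1))) - 2 * Real.log σ := by
    rw [Real.log_div (by positivity) (by positivity),
      Real.log_mul (by norm_num) (by positivity),
      Real.log_mul hqα.ne' ht.ne', Real.log_pow]
    push_cast; ring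
  have hexp : Real.exp (Real.log (q * α) * α + (α ^ 2 - α) / (2 * σ ^ 2) +
      -(1 / 2 + σ ^ 2 * L - α) ^ 2 / (2 * σ ^ 2)) ≤
      1.8 * (q * α * (q * (α - 1))) / σ ^ 2 := by
    apply (Real.le_log_iff_exp_le hR).mp
    rw [hSeq, hlogR]
    exact core_ineq σ q α L hq0 hq hσ hα hL hα1 hα2
  have hfin : 1 / 2 * (1.8 * (q * α * (q * (α - 1))) / σ ^ 2) =
      0.9 * q ^ 2 * α * (α - 1) / σ ^ 2 := by ring
  nlinarith [hexp]

theorem A_alpha_two_bound (σ q α L : ℝ) (hq0 : 0 < q) (hq : q ≤ 1 / 5) (hσ : 4 ≤ σ)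
    (hα : 1 < α) (hL : L = Real.log (1 + 1 / (q * (α - 1))))
    (hα1 : α ≤ (1 / 2) * σ ^ 2 * L - 2 * Real.log σ)
    (hα2 : α ≤ ((1 / 2) * σ ^ 2 * L ^ 2 - Real.log 5 - 2 * Real.log σ) /
        (L + Real.log (q * α) + 1 / (2 * σ ^ 2))) :
    ∫ z in Set.Ioi ((1 : ℝ) / 2 + σ ^ 2 * L),
        gaussPdf σ 0 z * ((1 - q) + q * (gaussPdf σ 1 z / gaussPdf σ 0 z)) ^ α ≤
      0.9 * q ^ 2 * α * (α - 1) / σ ^ 2 := by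
  have hσ0 : (0:ℝ) < σ := by linarith
  have ht : 0 < q * (α - 1) := by nlinarith
  have heL : Real.exp L = 1 + 1 / (q * (α - 1)) := by
    rw [hL]; exact Real.exp_log (by positivity)
  have hLpos : 0 < L := by
    rw [hL]; apply Real.log_pos; nlinarith [one_div_pos.mpr ht]
  have hlogσ : 0 ≤ Real.log σ := Real.log_nonneg (by linarith)
  have hαz : α ≤ 1 / 2 + σ ^ 2 * L := by nlinarith
  have hC : 0 ≤ (q * α) ^ α * Real.exp ((α ^ 2 - α) / (2 * σ ^ 2)) := by
    have := Real.rpow_nonneg (show (0:ℝ) ≤ q * α by nlinarith) α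
    positivity
  calc ∫ z in Set.Ioi ((1 : ℝ) / 2 + σ ^ 2 * L),
        gaussPdf σ 0 z * ((1 - q) + q * (gaussPdf σ 1 z / gaussPdf σ 0 z)) ^ α
      ≤ ∫ z in Set.Ioi ((1 : ℝ) / 2 + σ ^ 2 * L),
          (q * α) ^ α * Real.exp ((α ^ 2 - α) / (2 * σ ^ 2)) * gaussPdf σ α z := by
        apply integral_mono_of_nonneg
        · refine Filter.Eventually.of_forall fun z => ?_
          have h0 := gaussPdf_nonneg σ 0 z hσ0.le
          have h1 := gaussPdf_nonneg σ 1 z hσ0.le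
          have hbase : 0 ≤ (1 - q) + q * (gaussPdf σ 1 z / gaussPdf σ 0 z) := by
            have := div_nonneg h1 h0
            nlinarith
          exact mul_nonneg h0 (Real.rpow_nonneg hbase α)
        · exact ((gaussPdf_integrable σ α hσ0).const_mul _).integrableOn
        · refine (ae_restrict_iff' measurableSet_Ioi).mpr (Filter.Eventually.of_forall
            fun z hz => ?_)
          exact pointwise_bound σ q α L z hσ0 hq0 (by linarith) hα heL (le_of_lt hz)
    _ = (q * α) ^ α * Real.exp ((α ^ 2 - α) / (2 * σ ^ 2)) *
          ∫ z in Set.Ioi ((1 : ℝ) / 2 + σ ^ 2 * L), gaussPdf σ α z := integral_const_mul _ _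
    _ ≤ (q * α) ^ α * Real.exp ((α ^ 2 - α) / (2 * σ ^ 2)) *
          (1 / 2 * Real.exp (-(1 / 2 + σ ^ 2 * L - α) ^ 2 / (2 * σ ^ 2))) :=
        mul_le_mul_of_nonneg_left (gaussPdf_tail σ α _ hσ0 hαz) hC
    _ ≤ 0.9 * q ^ 2 * α * (α - 1) / σ ^ 2 :=
        arith_bound σ q α L hq0 hq hσ hα hL hα1 hα2
end
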